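/- arXiv:1405.7608 — 2 statements merged into one kernel-verified Lean document; each statement's English description precedes it below -/
import Mathlib

section
/- For every s with 0 ≤ s ≤ r and every m with 1 ≤ m ≤ p-1, the m-th convolution power of z_{p^s} in H satisfies z_{p^s}^m = m!·z_{m p^s}; moreover, for every s with 0 ≤ s ≤ r-1 one has z_{p^s}^p = 0 in H. -/
open Polynomial TensorProduct

noncomputable section

/-- The truncated polynomial algebra `K[t]/(t^{p^n})`, underlying the Hopf algebra
`H_{n,r,f}`. -/
abbrev TruncAlg (K : Type) [Field K] (p n : ℕ) : Type :=
  AdjoinRoot (X ^ p ^ n : K[X])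

/-- `t`, the image of `X` in `K[t]/(t^{p^n})`. -/
def tgen (K : Type) [Field K] (p n : ℕ) : TruncAlg K p n :=
  AdjoinRoot.root _

/-- The basis `1, t, t^2, …, t^{p^n-1}` of `K[t]/(t^{p^n})`. -/
def tbasis (K : Type) [Field K] (p n : ℕ) :
    Module.Basis (Fin (p ^ n)) K (TruncAlg K p n) :=
  (AdjoinRoot.powerBasis (f := (X ^ p ^ n : K[X]))
    (pow_ne_zero _ Polynomial.X_ne_zero)).basis.reindex
    (finCongr (by simp))

/-- The dual basis functional `z_j ∈ H = H_{n,r,f}^*`, with `z_j (t^i) = δ_{ij}`;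
junk value `0` out of range. -/
def zdual (K : Type) [Field K] (p n : ℕ) (j : ℕ) :
    Module.Dual K (TruncAlg K p n) :=
  if h : j < p ^ n then (tbasis K p n).coord ⟨j, h⟩ else 0

/-- The coefficient `1/(ℓ!(p-ℓ)!)`, computed in the prime field of `K`. -/
def pfCoeff (K : Type) [Field K] (p ℓ : ℕ) : K :=
  ((ℓ.factorial * (p - ℓ).factorial : ℕ) : K)⁻¹

/-- The element `Δ(t) = t⊗1 + 1⊗t + f Σ_{ℓ=1}^{p-1} (1/(ℓ!(p-ℓ)!)) t^{p^r ℓ} ⊗ t^{p^r (p-ℓ)}`. -/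
def Delta_t (K : Type) [Field K] (p n r : ℕ) (f : K) :
    TruncAlg K p n ⊗[K] TruncAlg K p n :=
  tgen K p n ⊗ₜ 1 + 1 ⊗ₜ tgen K p n +
    f • ∑ ℓ ∈ Finset.Icc 1 (p - 1),
      pfCoeff K p ℓ • ((tgen K p n ^ (p ^ r * ℓ)) ⊗ₜ[K] (tgen K p n ^ (p ^ r * (p - ℓ))))

/-- The comultiplication of `H_{n,r,f}` as a linear map, determined by `Δ(t^i) = Δ(t)^i`
(it is the unique `K`-algebra map with `t ↦ Δ(t)`). -/
def DeltaMap (K : Type) [Field K] (p n r : ℕ) (f : K) :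
    TruncAlg K p n →ₗ[K] TruncAlg K p n ⊗[K] TruncAlg K p n :=
  (tbasis K p n).constr K fun i => (Delta_t K p n r f) ^ (i : ℕ)

/-- Convolution product on `H = (H_{n,r,f})^*`:  `(z * z')(h) = mult ((z ⊗ z')(Δ h))`. -/
def conv (K : Type) [Field K] (p n r : ℕ) (f : K)
    (z z' : Module.Dual K (TruncAlg K p n)) : Module.Dual K (TruncAlg K p n) :=
  (LinearMap.mul' K K) ∘ₗ (TensorProduct.map z z') ∘ₗ DeltaMap K p n r f

/-- Convolution powers; the 0th power is the unit `z_0 = ε` of `H`. -/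
def convPow (K : Type) [Field K] (p n r : ℕ) (f : K)
    (z : Module.Dual K (TruncAlg K p n)) : ℕ → Module.Dual K (TruncAlg K p n)
  | 0 => zdual K p n 0
  | m + 1 => conv K p n r f (convPow K p n r f z m) z

/-- The convolution product `z_1^{j 0} · z_p^{j 1} ⋯ z_{p^{m-1}}^{j (m-1)}` in `H`. -/
def zprod (K : Type) [Field K] (p n r : ℕ) (f : K)
    (j : ℕ → ℕ) : ℕ → Module.Dual K (TruncAlg K p n)
  | 0 => zdual K p n 0
  | m + 1 => conv K p n r f (zprod K p n r f j m)
      (convPow K p n r f (zdual K p n (p ^ m)) (j m))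



-- ==================== auxiliary lemmas ====================
section Aux
variable (K : Type) [Field K] (p n r : ℕ) (f : K)

lemma tbasis_apply (i : Fin (p ^ n)) : tbasis K p n i = tgen K p n ^ (i : ℕ) := by
  rw [tbasis, Module.Basis.reindex_apply, PowerBasis.basis_eq_pow]
  simp [tgen, AdjoinRoot.powerBasis_gen]

lemma tgen_pow_eq_zero : tgen K p n ^ p ^ n = 0 := by
  rw [tgen, ← AdjoinRoot.mk_X, ← map_pow, AdjoinRoot.mk_self]

lemma zdual_tpow (j i : ℕ) (hj : j < p ^ n) :
    zdual K p n j (tgen K p n ^ i) = if i = j then 1 else 0 := by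
  rcases lt_or_ge i (p ^ n) with hi | hi
  · rw [zdual, dif_pos hj, ← tbasis_apply K p n ⟨i, hi⟩, Module.Basis.coord_apply, Module.Basis.repr_self,
      Finsupp.single_apply]
    simp [Fin.ext_iff]
  · obtain ⟨k, rfl⟩ := Nat.exists_eq_add_of_le hi
    rw [pow_add, tgen_pow_eq_zero, zero_mul, map_zero, if_neg (by omega)]

lemma zdual_mul_pow (j e : ℕ) (hj : j < p ^ n) (hje : j < e) (x : TruncAlg K p n) :
    zdual K p n j (x * tgen K p n ^ e) = 0 := by
  have h : (zdual K p n j ∘ₗ LinearMap.mulRight K (tgen K p n ^ e)) = 0 := by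
    apply (tbasis K p n).ext
    intro i
    simp only [LinearMap.comp_apply, LinearMap.mulRight_apply, tbasis_apply,
      LinearMap.zero_apply, ← pow_add]
    rw [zdual_tpow K p n j _ hj, if_neg (by omega)]
  simpa using LinearMap.congr_fun h x

/-- abbreviation for the functional `x ⊗ y ↦ z_a(x) z_b(y)` -/
def psi (a b : ℕ) : TruncAlg K p n ⊗[K] TruncAlg K p n →ₗ[K] K :=
  (LinearMap.mul' K K) ∘ₗ (TensorProduct.map (zdual K p n a) (zdual K p n b))

lemma psi_tmul (a b : ℕ) (x y : TruncAlg K p n) :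
    psi K p n a b (x ⊗ₜ y) = zdual K p n a x * zdual K p n b y := by
  simp [psi, LinearMap.mul'_apply]

lemma psi_mul_tmul_pow (a b E e : ℕ) (ha : a < p ^ n) (hb : b < p ^ n)
    (h : a < E ∨ b < e) (w : TruncAlg K p n ⊗[K] TruncAlg K p n) :
    psi K p n a b (w * ((tgen K p n ^ E) ⊗ₜ[K] (tgen K p n ^ e))) = 0 := by
  induction w with
  | zero => simp
  | tmul x y =>
    rw [Algebra.TensorProduct.tmul_mul_tmul, psi_tmul]
    rcases h with h | h
    · rw [zdual_mul_pow K p n a E ha h x, zero_mul]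
    · rw [zdual_mul_pow K p n b e hb h y, mul_zero]
  | add x y hx hy => rw [add_mul, map_add, hx, hy, add_zero]

lemma psi_mul_S (a b : ℕ) (ha : a < p ^ n) (hb : b < p ^ n)
    (hl : ∀ ℓ ∈ Finset.Icc 1 (p - 1), a < p ^ r * ℓ ∨ b < p ^ r * (p - ℓ))
    (w : TruncAlg K p n ⊗[K] TruncAlg K p n) :
    psi K p n a b (w * (f • ∑ ℓ ∈ Finset.Icc 1 (p - 1),
      pfCoeff K p ℓ • ((tgen K p n ^ (p ^ r * ℓ)) ⊗ₜ[K] (tgen K p n ^ (p ^ r * (p - ℓ)))))) = 0 := by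
  rw [mul_smul_comm, Finset.mul_sum, map_smul, map_sum]
  rw [Finset.sum_eq_zero, smul_zero]
  intro ℓ hℓ
  rw [mul_smul_comm, map_smul, psi_mul_tmul_pow K p n a b _ _ ha hb (hl ℓ hℓ), smul_zero]

lemma conv_zdual (a b : ℕ) (hab : a + b < p ^ n)
    (hl : ∀ ℓ ∈ Finset.Icc 1 (p - 1), a < p ^ r * ℓ ∨ b < p ^ r * (p - ℓ)) :
    conv K p n r f (zdual K p n a) (zdual K p n b)
      = (((a + b).choose a : ℕ) : K) • zdual K p n (a + b) := by
  have ha : a < p ^ n := lt_of_le_of_lt (Nat.le_add_right a b) hab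
  have hb : b < p ^ n := lt_of_le_of_lt (Nat.le_add_left b a) hab
  apply (tbasis K p n).ext
  intro i
  have hD : DeltaMap K p n r f (tbasis K p n i) = Delta_t K p n r f ^ (i : ℕ) :=
    Module.Basis.constr_basis _ _ _ _
  have lhs_eq : conv K p n r f (zdual K p n a) (zdual K p n b) (tbasis K p n i)
      = psi K p n a b (Delta_t K p n r f ^ (i : ℕ)) := by
    simp only [conv, psi, LinearMap.comp_apply, hD]
  set A : TruncAlg K p n ⊗[K] TruncAlg K p n :=
    tgen K p n ⊗ₜ 1 + 1 ⊗ₜ tgen K p n with hA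
  have key : psi K p n a b (Delta_t K p n r f ^ (i : ℕ)) = psi K p n a b (A ^ (i : ℕ)) := by
    have hgeom := geom_sum₂_mul (Delta_t K p n r f) A (i : ℕ)
    have hdiff : Delta_t K p n r f - A = f • ∑ ℓ ∈ Finset.Icc 1 (p - 1),
        pfCoeff K p ℓ • ((tgen K p n ^ (p ^ r * ℓ)) ⊗ₜ[K] (tgen K p n ^ (p ^ r * (p - ℓ)))) := by
      rw [Delta_t, hA]; ring
    have hpow : Delta_t K p n r f ^ (i : ℕ) = A ^ (i : ℕ) + (∑ j ∈ Finset.range (i : ℕ),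
        Delta_t K p n r f ^ j * A ^ ((i : ℕ) - 1 - j)) * (Delta_t K p n r f - A) := by
      rw [hgeom]; ring
    rw [hpow, map_add, hdiff, psi_mul_S K p n r f a b ha hb hl, add_zero]
  have hnat : ∀ (w : TruncAlg K p n ⊗[K] TruncAlg K p n) (c : ℕ),
      psi K p n a b (w * (c : TruncAlg K p n ⊗[K] TruncAlg K p n))
        = (c : K) * psi K p n a b w := by
    intro w c
    rw [mul_comm, ← nsmul_eq_mul, map_nsmul, nsmul_eq_mul]
  have binom : psi K p n a b (A ^ (i : ℕ))
      = if (i : ℕ) = a + b then (((a + b).choose a : ℕ) : K) else 0 := by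
    rw [hA, add_pow, map_sum]
    have hsummand : ∀ k, psi K p n a b
        ((tgen K p n ⊗ₜ[K] (1 : TruncAlg K p n)) ^ k *
          ((1 : TruncAlg K p n) ⊗ₜ[K] tgen K p n) ^ ((i : ℕ) - k) *
          (((i : ℕ).choose k : ℕ) : TruncAlg K p n ⊗[K] TruncAlg K p n))
        = ((if k = a then (1:K) else 0) * (if (i : ℕ) - k = b then (1:K) else 0)) *
          (((i : ℕ).choose k : ℕ) : K) := by
      intro k
      rw [hnat, Algebra.TensorProduct.tmul_pow, Algebra.TensorProduct.tmul_pow, one_pow, one_pow,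
        Algebra.TensorProduct.tmul_mul_tmul, mul_one, one_mul, psi_tmul,
        zdual_tpow K p n a k ha, zdual_tpow K p n b _ hb, mul_comm]
    rw [Finset.sum_congr rfl (fun k _ => hsummand k), Finset.sum_eq_single a]
    · by_cases hi : (i : ℕ) = a + b
      · have h1 : (i : ℕ) - a = b := by omega
        have h2 : a ≤ (i : ℕ) := by omega
        simp [hi, h1]
      · rcases Nat.lt_or_ge (i : ℕ) a with h | h
        · simp [Nat.choose_eq_zero_of_lt h, hi]
        · have h1 : (i : ℕ) - a ≠ b := by omega
          simp [h1, hi]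
    · intro k _ hk
      simp [hk]
    · intro hnot
      have : (i : ℕ) < a := by
        simp only [Finset.mem_range] at hnot; omega
      simp [Nat.choose_eq_zero_of_lt this]
  rw [lhs_eq, key, binom, LinearMap.smul_apply, tbasis_apply,
    zdual_tpow K p n _ _ hab]
  by_cases h : (i : ℕ) = a + b <;> simp [h]

lemma conv_smul_left (c : K) (z z' : Module.Dual K (TruncAlg K p n)) :
    conv K p n r f (c • z) z' = c • conv K p n r f z z' := by
  rw [conv, conv, TensorProduct.map_smul_left]
  ext x
  simp

lemma convPow_succ (z : Module.Dual K (TruncAlg K p n)) (m : ℕ) :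
    convPow K p n r f z (m + 1) = conv K p n r f (convPow K p n r f z m) z := rfl

lemma lucas_pow (p : ℕ) [Fact p.Prime] (s a b : ℕ) :
    (a * p ^ s).choose (b * p ^ s) ≡ a.choose b [MOD p] := by
  induction s with
  | zero => simpa using Nat.ModEq.refl _
  | succ s ih =>
    have hp : 0 < p := (Fact.out : p.Prime).pos
    calc (a * p ^ (s+1)).choose (b * p ^ (s+1))
        ≡ ((a * p ^ (s+1)) % p).choose ((b * p ^ (s+1)) % p) *
          ((a * p ^ (s+1)) / p).choose ((b * p ^ (s+1)) / p) [MOD p] :=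
          Choose.choose_modEq_choose_mod_mul_choose_div_nat
      _ = (a * p ^ s).choose (b * p ^ s) := by
          rw [pow_succ, ← mul_assoc, ← mul_assoc, Nat.mul_mod_left, Nat.mul_mod_left,
            Nat.mul_div_cancel _ hp, Nat.mul_div_cancel _ hp]
          simp
      _ ≡ a.choose b [MOD p] := ih

end Aux

/-- In `H = H_{n,r,f}^*`, for `0 ≤ s ≤ r` and `1 ≤ m ≤ p-1` one has
`z_{p^s}^m = m!·z_{m p^s}` (convolution powers), and for `0 ≤ s ≤ r-1` one has
`z_{p^s}^p = 0`. -/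
theorem convPow_zdual_eq
    (p : ℕ) [Fact p.Prime] (F : Type) [Field F] [Fintype F] [CharP F p]
    (n r : ℕ) (hr : 0 < r) (hrn : r < n) (hn2r : n ≤ 2 * r)
    (f : LaurentSeries F) (hf : f ≠ 0) :
    (∀ s m : ℕ, s ≤ r → 1 ≤ m → m ≤ p - 1 →
      convPow (LaurentSeries F) p n r f (zdual (LaurentSeries F) p n (p ^ s)) m
        = (m.factorial : LaurentSeries F) • zdual (LaurentSeries F) p n (m * p ^ s)) ∧
    (∀ s : ℕ, s < r →
      convPow (LaurentSeries F) p n r f (zdual (LaurentSeries F) p n (p ^ s)) p = 0) := by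

  haveI : CharP (LaurentSeries F) p :=
    charP_of_injective_ringHom (algebraMap F (LaurentSeries F)).injective p
  have hp : p.Prime := Fact.out
  have hp1 : 1 < p := hp.one_lt
  have main : ∀ s : ℕ, s ≤ r → ∀ m : ℕ, m ≤ p - 1 →
      convPow (LaurentSeries F) p n r f (zdual (LaurentSeries F) p n (p ^ s)) m
        = (m.factorial : LaurentSeries F) • zdual (LaurentSeries F) p n (m * p ^ s) := by
    intro s hs m
    have hps : p ^ s ≤ p ^ r := Nat.pow_le_pow_right hp.pos hs
    have hprn : p ^ (r + 1) ≤ p ^ n := Nat.pow_le_pow_right hp.pos (by omega)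
    induction m with
    | zero => intro _; simp [convPow]
    | succ m ih =>
      intro hm1
      have hm' : m ≤ p - 1 := by omega
      rw [convPow_succ, ih hm', conv_smul_left]
      have hcond : ∀ ℓ ∈ Finset.Icc 1 (p - 1),
          m * p ^ s < p ^ r * ℓ ∨ p ^ s < p ^ r * (p - ℓ) := by
        intro ℓ hℓ
        rw [Finset.mem_Icc] at hℓ
        by_cases h : p ^ s < p ^ r * (p - ℓ)
        · exact Or.inr h
        · left
          push_neg at h
          have hpr : 0 < p ^ r := Nat.pow_pos hp.pos
          have h1 : p ^ r * (p - ℓ) ≤ p ^ r := le_trans h hps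
          have h2 : p - ℓ ≤ 1 := Nat.le_of_mul_le_mul_left
            (by simpa [mul_comm] using h1) hpr
          have hℓeq : ℓ = p - 1 := by omega
          calc m * p ^ s ≤ (p - 2) * p ^ r := Nat.mul_le_mul (by omega) hps
            _ < (p - 1) * p ^ r := by
                exact Nat.mul_lt_mul_of_lt_of_le (by omega) le_rfl hpr
            _ = p ^ r * ℓ := by rw [hℓeq, mul_comm]
      have hab : m * p ^ s + p ^ s < p ^ n := by
        have h2 : (m + 1) * p ^ s ≤ (p - 1) * p ^ r := Nat.mul_le_mul hm1 hps
        have h3 : (p - 1) * p ^ r < p ^ (r + 1) := by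
          rw [pow_succ, mul_comm (p ^ r) p]
          exact Nat.mul_lt_mul_of_lt_of_le (by omega) le_rfl (Nat.pow_pos hp.pos)
        have h1 : m * p ^ s + p ^ s = (m + 1) * p ^ s := by ring
        omega
      rw [conv_zdual (LaurentSeries F) p n r f (m * p ^ s) (p ^ s) hab hcond]
      have hidx : m * p ^ s + p ^ s = (m + 1) * p ^ s := by ring
      have hC : (((m + 1) * p ^ s).choose (m * p ^ s) : LaurentSeries F)
          = ((m + 1 : ℕ) : LaurentSeries F) := by
        apply CharP.natCast_eq_natCast' (LaurentSeries F) p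
        simpa [Nat.choose_succ_self_right] using lucas_pow p s (m + 1) m
      rw [hidx, hC]
      ext x
      simp only [LinearMap.smul_apply, smul_eq_mul]
      push_cast [Nat.factorial_succ]
      ring
  refine ⟨fun s m hs _ hm2 => main s hs m hm2, ?_⟩
  intro s hsr
  obtain ⟨q, rfl⟩ : ∃ q, p = q + 1 := ⟨p - 1, by omega⟩
  rw [convPow_succ, main s (le_of_lt hsr) q (by omega), conv_smul_left]
  have hcond : ∀ ℓ ∈ Finset.Icc 1 (q + 1 - 1),
      q * (q + 1) ^ s < (q + 1) ^ r * ℓ ∨ (q + 1) ^ s < (q + 1) ^ r * (q + 1 - ℓ) := by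
    intro ℓ hℓ
    rw [Finset.mem_Icc] at hℓ
    left
    have h1 : q * (q + 1) ^ s < (q + 1) ^ (s + 1) := by
      rw [pow_succ, mul_comm ((q + 1) ^ s) (q + 1)]
      exact Nat.mul_lt_mul_of_lt_of_le (by omega) le_rfl (Nat.pow_pos hp.pos)
    have hps1 : (q + 1) ^ (s + 1) ≤ (q + 1) ^ r := Nat.pow_le_pow_right hp.pos (by omega)
    have h2 : (q + 1) ^ r ≤ (q + 1) ^ r * ℓ := Nat.le_mul_of_pos_right _ (by omega)
    omega
  have hab : q * (q + 1) ^ s + (q + 1) ^ s < (q + 1) ^ n := by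
    have h1 : q * (q + 1) ^ s + (q + 1) ^ s = (q + 1) ^ (s + 1) := by rw [pow_succ]; ring
    have hps1 : (q + 1) ^ (s + 1) ≤ (q + 1) ^ r := Nat.pow_le_pow_right hp.pos (by omega)
    have h2 : (q + 1) ^ r < (q + 1) ^ n := Nat.pow_lt_pow_right hp1 hrn
    omega
  rw [conv_zdual (LaurentSeries F) (q + 1) n r f _ _ hab hcond]
  have hC : ((q * (q + 1) ^ s + (q + 1) ^ s).choose (q * (q + 1) ^ s) : LaurentSeries F) = 0 := by
    rw [CharP.cast_eq_zero_iff (LaurentSeries F) (q + 1)]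
    have h1 : (q * (q + 1) ^ s + (q + 1) ^ s) = (q + 1) * (q + 1) ^ s := by ring
    rw [h1]
    have hmod : ((q + 1) * (q + 1) ^ s).choose (q * (q + 1) ^ s) ≡ 0 [MOD q + 1] :=
      calc ((q + 1) * (q + 1) ^ s).choose (q * (q + 1) ^ s)
          ≡ (q + 1).choose q [MOD q + 1] := lucas_pow (q + 1) s (q + 1) q
        _ = q + 1 := Nat.choose_succ_self_right q
        _ ≡ 0 [MOD q + 1] := (Nat.modEq_zero_iff_dvd).mpr dvd_rfl
    exact (Nat.modEq_zero_iff_dvd).mp hmod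
  rw [hC]
  ext x
  simp

end
end

section
/- Let h ∈ ℤ with 2 - p^n ≤ h ≤ 1. For 0 ≤ j ≤ p^n - 1 define d_h(j) = ⌊(j + 1 - h)/p^n⌋ and w_h(j) = min{ d_h(i + j) - d_h(i) : 0 ≤ i ≤ p^n - 1 and i_s + j_s ≤ p - 1 for all 0 ≤ s ≤ n-1 }, where i_s and j_s denote base-p digits. Then w_h(j) = d_h(j) for all 0 ≤ j ≤ p^n - 1 if and only if 2h > 1 - p^n. -/
/-- `d_h(j) = ⌊(j + 1 - h)/p^n⌋` (the case `b = 1` of the numerical data of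
Byott–Childs–Elder). -/
def dfun (p n : ℕ) (h : ℤ) (j : ℕ) : ℤ := ((j : ℤ) + 1 - h) / (p : ℤ) ^ n

/-- `w_h(j) = min { d_h(i+j) - d_h(i) : 0 ≤ i ≤ p^n - 1, i_s + j_s ≤ p-1 for all s }`. -/
noncomputable def wfun (p n : ℕ) (h : ℤ) (j : ℕ) : ℤ :=
  sInf {k : ℤ | ∃ i : ℕ, i < p ^ n ∧
    (∀ s : ℕ, s < n → i / p ^ s % p + j / p ^ s % p ≤ p - 1) ∧
    k = dfun p n h (i + j) - dfun p n h i}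

lemma aux_sub_decomp (d K x : ℕ) (hd : 0 < d) (hx : x < K * d) :
    K * d - 1 - x = (K - 1 - x / d) * d + (d - 1 - x % d) := by
  have h1 : d * (x / d) + x % d = x := Nat.div_add_mod x d
  have h2 : x % d < d := Nat.mod_lt x hd
  have h3 : x / d < K := (Nat.div_lt_iff_lt_mul hd).mpr hx
  rw [Nat.sub_mul, Nat.sub_mul, one_mul]
  have h4 : (x / d + 1) * d ≤ K * d := Nat.mul_le_mul_right d h3
  rw [add_mul, one_mul] at h4
  have h5 : d * (x / d) = x / d * d := Nat.mul_comm _ _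
  rw [h5] at h1
  generalize x / d * d = B at *
  generalize K * d = A at *
  omega

lemma aux_sub_div (d K x : ℕ) (hd : 0 < d) (hx : x < K * d) :
    (K * d - 1 - x) / d = K - 1 - x / d := by
  rw [aux_sub_decomp d K x hd hx, Nat.add_comm, Nat.add_mul_div_right _ _ hd, Nat.div_eq_of_lt (by omega), Nat.zero_add]

lemma aux_sub_mod (d K x : ℕ) (hd : 0 < d) (hx : x < K * d) :
    (K * d - 1 - x) % d = d - 1 - x % d := by
  rw [aux_sub_decomp d K x hd hx, Nat.add_comm, Nat.add_mul_mod_self_right, Nat.mod_eq_of_lt (by omega)]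

lemma digit_compl (p n : ℕ) (hp : 2 ≤ p) (i : ℕ) (hi : i < p ^ n) (s : ℕ) (hs : s < n) :
    (p ^ n - 1 - i) / p ^ s % p + i / p ^ s % p = p - 1 := by
  have hd : 0 < p ^ s := Nat.pow_pos (by omega)
  have hKd : p ^ n = p ^ (n - s) * p ^ s := by
    rw [← pow_add]; congr 1; omega
  have hi' : i < p ^ (n - s) * p ^ s := by rwa [← hKd]
  have h1 : (p ^ n - 1 - i) / p ^ s = p ^ (n - s) - 1 - i / p ^ s := by
    rw [hKd]; exact aux_sub_div _ _ _ hd hi'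
  have hq : i / p ^ s < p ^ (n - s) := (Nat.div_lt_iff_lt_mul hd).mpr hi'
  have hK : p ^ (n - s) = p ^ (n - s - 1) * p := by
    rw [← pow_succ]; congr 1; omega
  rw [h1, hK]
  rw [aux_sub_mod p (p ^ (n - s - 1)) (i / p ^ s) (by omega) (by rw [← hK]; exact hq)]
  have : i / p ^ s % p < p := Nat.mod_lt _ (by omega)
  omega

lemma add_lt_pow_of_digits (p : ℕ) (hp : 2 ≤ p) :
    ∀ n, ∀ i j : ℕ, i < p ^ n → j < p ^ n →
      (∀ s : ℕ, s < n → i / p ^ s % p + j / p ^ s % p ≤ p - 1) → i + j < p ^ n := by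
  intro n
  induction n with
  | zero => intro i j hi hj _; simp only [pow_zero] at hi hj ⊢; omega
  | succ n ih =>
    intro i j hi hj hdig
    have hpn : 0 < p ^ n := Nat.pow_pos (by omega)
    have htop := hdig n (Nat.lt_succ_self n)
    have hiq : i / p ^ n < p := by
      rw [Nat.div_lt_iff_lt_mul hpn, ← pow_succ']; exact hi
    have hjq : j / p ^ n < p := by
      rw [Nat.div_lt_iff_lt_mul hpn, ← pow_succ']; exact hj
    rw [Nat.mod_eq_of_lt hiq, Nat.mod_eq_of_lt hjq] at htop
    have hlow : ∀ s, s < n → i % p ^ n / p ^ s % p + j % p ^ n / p ^ s % p ≤ p - 1 := by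
      intro s hs
      have hsplit : p ^ n = p ^ s * p ^ (n - s) := by rw [← pow_add]; congr 1; omega
      have e1 : i % p ^ n / p ^ s % p = i / p ^ s % p := by
        rw [hsplit, Nat.mod_mul_right_div_self,
          Nat.mod_mod_of_dvd _ (dvd_pow_self p (by omega : n - s ≠ 0))]
      have e2 : j % p ^ n / p ^ s % p = j / p ^ s % p := by
        rw [hsplit, Nat.mod_mul_right_div_self,
          Nat.mod_mod_of_dvd _ (dvd_pow_self p (by omega : n - s ≠ 0))]
      rw [e1, e2]; exact hdig s (hs.trans (Nat.lt_succ_self n))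
    have hrec : i % p ^ n + j % p ^ n < p ^ n :=
      ih (i % p ^ n) (j % p ^ n) (Nat.mod_lt _ hpn) (Nat.mod_lt _ hpn) hlow
    have ei : i = p ^ n * (i / p ^ n) + i % p ^ n := (Nat.div_add_mod i (p ^ n)).symm
    have ej : j = p ^ n * (j / p ^ n) + j % p ^ n := (Nat.div_add_mod j (p ^ n)).symm
    have hmul : p ^ n * (i / p ^ n) + p ^ n * (j / p ^ n) ≤ p ^ n * (p - 1) := by
      rw [← Nat.mul_add]; exact Nat.mul_le_mul_left _ (by omega)
    have hlt : i + j < p ^ n * (p - 1) + p ^ n := by omega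
    have hms := Nat.mul_succ (p ^ n) (p - 1)
    have e : p - 1 + 1 = p := by omega
    rw [Nat.succ_eq_add_one, e] at hms
    have : p ^ n * p = p ^ (n + 1) := (pow_succ p n).symm
    omega

lemma dfun_eq_zero' (p n : ℕ) (h : ℤ) (m : ℕ) (h0 : 0 ≤ (m : ℤ) + 1 - h)
    (hlt : (m : ℤ) + 1 - h < (p : ℤ) ^ n) : dfun p n h m = 0 :=
  Int.ediv_eq_zero_of_lt h0 hlt

lemma dfun_eq_one' (p n : ℕ) (hp : 0 < p) (h : ℤ) (m : ℕ)
    (hge : (p : ℤ) ^ n ≤ (m : ℤ) + 1 - h) (hlt : (m : ℤ) + 1 - h < 2 * (p : ℤ) ^ n) :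
    dfun p n h m = 1 := by
  have hp' : (0 : ℤ) < (p : ℤ) := by exact_mod_cast hp
  have hb : (0 : ℤ) < (p : ℤ) ^ n := by positivity
  unfold dfun
  have e : (m : ℤ) + 1 - h = ((m : ℤ) + 1 - h - (p : ℤ) ^ n) + (p : ℤ) ^ n * 1 := by ring
  rw [e, Int.add_mul_ediv_left _ _ (ne_of_gt hb),
    Int.ediv_eq_zero_of_lt (by linarith) (by linarith), zero_add]

lemma dfun_val (p n : ℕ) (hp : 0 < p) (h : ℤ) (h1 : 2 - (p : ℤ) ^ n ≤ h) (h2 : h ≤ 1)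
    (m : ℕ) (hm : (m : ℤ) < (p : ℤ) ^ n) :
    dfun p n h m = if (p : ℤ) ^ n - 1 + h ≤ (m : ℤ) then 1 else 0 := by
  have hm0 : (0 : ℤ) ≤ (m : ℤ) := Int.natCast_nonneg m
  split_ifs with ht
  · exact dfun_eq_one' p n hp h m (by linarith) (by linarith)
  · exact dfun_eq_zero' p n h m (by linarith) (by linarith)

/-- For `2 - p^n ≤ h ≤ 1`, one has `w_h(j) = d_h(j)` for all
`0 ≤ j ≤ p^n - 1` if and only if `2h > 1 - p^n`. -/
theorem wfun_eq_dfun_iff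
    (p : ℕ) [Fact p.Prime] (n : ℕ) (hn : 2 ≤ n)
    (h : ℤ) (h1 : 2 - (p : ℤ) ^ n ≤ h) (h2 : h ≤ 1) :
    (∀ j : ℕ, j < p ^ n → wfun p n h j = dfun p n h j) ↔ 1 - (p : ℤ) ^ n < 2 * h := by
  have hp2 : 2 ≤ p := (Fact.out : p.Prime).two_le
  have hp0 : 0 < p := by omega
  have hpZ : (0 : ℤ) < (p : ℤ) := by exact_mod_cast hp0
  have hNpos : (0 : ℤ) < (p : ℤ) ^ n := by positivity
  have hNnat : 0 < p ^ n := Nat.pow_pos hp0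
  have hcast : ((p ^ n : ℕ) : ℤ) = (p : ℤ) ^ n := by push_cast; ring
  constructor
  · -- forward: w = d everywhere implies 2h > 1 - p^n
    intro H
    by_contra hc
    push_neg at hc   -- hc : 2 * h ≤ 1 - p^n
    obtain ⟨jn, hjZ⟩ : ∃ jn : ℕ, (jn : ℤ) = (p : ℤ) ^ n - 1 + h :=
      ⟨((p : ℤ) ^ n - 1 + h).toNat, Int.toNat_of_nonneg (by linarith)⟩
    have hjlt : jn < p ^ n := by
      have : (jn : ℤ) < ((p ^ n : ℕ) : ℤ) := by rw [hjZ, hcast]; linarith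
      exact_mod_cast this
    have hsum : (p ^ n - 1 - jn) + jn + 1 = p ^ n := by omega
    have hsZ : ((p ^ n - 1 - jn : ℕ) : ℤ) = (p : ℤ) ^ n - 1 - (jn : ℤ) := by
      have := congrArg (fun t : ℕ => (t : ℤ)) hsum
      push_cast at this
      linarith
    have hiZ : ((p ^ n - 1 - jn : ℕ) : ℤ) = -h := by rw [hsZ, hjZ]; ring
    have hmem0 : (0 : ℤ) ∈ {k : ℤ | ∃ i : ℕ, i < p ^ n ∧
        (∀ s : ℕ, s < n → i / p ^ s % p + jn / p ^ s % p ≤ p - 1) ∧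
        k = dfun p n h (i + jn) - dfun p n h i} := by
      refine ⟨p ^ n - 1 - jn, by omega, ?_, ?_⟩
      · intro s hs
        have := digit_compl p n hp2 jn hjlt s hs
        omega
      · have hsumZ : (((p ^ n - 1 - jn) + jn : ℕ) : ℤ) = (p : ℤ) ^ n - 1 := by
          have := congrArg (fun t : ℕ => (t : ℤ)) hsum
          push_cast at this ⊢
          linarith
        have e1 : dfun p n h ((p ^ n - 1 - jn) + jn) = 1 := by
          rw [dfun_val p n hp0 h h1 h2 _ (by rw [hsumZ]; linarith),
            if_pos (by rw [hsumZ]; linarith)]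
        have e2 : dfun p n h (p ^ n - 1 - jn) = 1 := by
          rw [dfun_val p n hp0 h h1 h2 _ (by rw [hiZ]; linarith),
            if_pos (by rw [hiZ]; linarith)]
        rw [e1, e2]; ring
    have hbdd : BddBelow {k : ℤ | ∃ i : ℕ, i < p ^ n ∧
        (∀ s : ℕ, s < n → i / p ^ s % p + jn / p ^ s % p ≤ p - 1) ∧
        k = dfun p n h (i + jn) - dfun p n h i} := by
      refine ⟨-1, ?_⟩
      rintro k ⟨i, hi, hdig, rfl⟩
      have hij : i + jn < p ^ n := add_lt_pow_of_digits p hp2 n i jn hi hjlt hdig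
      have hiN : (i : ℤ) < (p : ℤ) ^ n := by
        have : (i : ℤ) < ((p ^ n : ℕ) : ℤ) := by exact_mod_cast hi
        rwa [hcast] at this
      have hijN : ((i + jn : ℕ) : ℤ) < (p : ℤ) ^ n := by
        have : ((i + jn : ℕ) : ℤ) < ((p ^ n : ℕ) : ℤ) := by exact_mod_cast hij
        rwa [hcast] at this
      rw [dfun_val p n hp0 h h1 h2 _ hijN, dfun_val p n hp0 h h1 h2 _ hiN]
      split_ifs <;> norm_num
    have hinf : wfun p n h jn ≤ 0 := csInf_le hbdd hmem0
    have hdjn : dfun p n h jn = 1 := by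
      rw [dfun_val p n hp0 h h1 h2 _ (by rw [hjZ]; linarith),
        if_pos (by rw [hjZ])]
    have hH := H jn hjlt
    rw [hdjn] at hH
    linarith
  · -- backward: 2h > 1 - p^n implies w = d everywhere
    intro Hgt j hj
    have hjN : (j : ℤ) < (p : ℤ) ^ n := by
      have : (j : ℤ) < ((p ^ n : ℕ) : ℤ) := by exact_mod_cast hj
      rwa [hcast] at this
    have hmem : dfun p n h j ∈ {k : ℤ | ∃ i : ℕ, i < p ^ n ∧
        (∀ s : ℕ, s < n → i / p ^ s % p + j / p ^ s % p ≤ p - 1) ∧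
        k = dfun p n h (i + j) - dfun p n h i} := by
      refine ⟨0, hNnat, ?_, ?_⟩
      · intro s hs
        have h1' : j / p ^ s % p < p := Nat.mod_lt _ hp0
        simp only [Nat.zero_div, Nat.zero_mod]
        omega
      · have hd0 : dfun p n h 0 = 0 := by
          apply dfun_eq_zero' <;> push_cast <;> linarith
        rw [zero_add, hd0, sub_zero]
    have hlb : ∀ k ∈ {k : ℤ | ∃ i : ℕ, i < p ^ n ∧
        (∀ s : ℕ, s < n → i / p ^ s % p + j / p ^ s % p ≤ p - 1) ∧
        k = dfun p n h (i + j) - dfun p n h i}, dfun p n h j ≤ k := by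
      rintro k ⟨i, hi, hdig, rfl⟩
      have hij : i + j < p ^ n := add_lt_pow_of_digits p hp2 n i j hi hj hdig
      have hiN : (i : ℤ) < (p : ℤ) ^ n := by
        have : (i : ℤ) < ((p ^ n : ℕ) : ℤ) := by exact_mod_cast hi
        rwa [hcast] at this
      have hijN : ((i + j : ℕ) : ℤ) < (p : ℤ) ^ n := by
        have : ((i + j : ℕ) : ℤ) < ((p ^ n : ℕ) : ℤ) := by exact_mod_cast hij
        rwa [hcast] at this
      have hiNN : (0 : ℤ) ≤ (i : ℤ) := Int.natCast_nonneg i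
      have hjNN : (0 : ℤ) ≤ (j : ℤ) := Int.natCast_nonneg j
      rw [dfun_val p n hp0 h h1 h2 _ hijN, dfun_val p n hp0 h h1 h2 _ hiN,
        dfun_val p n hp0 h h1 h2 _ hjN]
      have hpush : ((i + j : ℕ) : ℤ) = (i : ℤ) + (j : ℤ) := by push_cast; ring
      rw [hpush] at hijN ⊢
      obtain ⟨N, hNeq⟩ : ∃ N : ℤ, (p : ℤ) ^ n = N := ⟨_, rfl⟩
      rw [hNeq] at hijN hiN hjN ⊢
      rw [hNeq] at Hgt
      split_ifs <;> omega
    unfold wfun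
    exact le_antisymm (csInf_le ⟨dfun p n h j, hlb⟩ hmem) (le_csInf ⟨_, hmem⟩ hlb)
end
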